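/- (Log-determinant doubling criterion.) Let A and B be d×d real symmetric positive definite matrices with B ⪯ A (i.e., A − B positive semidefinite). If log det(A) − log det(B) ≤ 1, then A ⪯ e · B, where e is Euler's number. -/

import Mathlib

open Matrix
open scoped MatrixOrder

lemma aux_eig_ge_one {n : Type*} [Fintype n] [DecidableEq n] {C : Matrix n n ℝ}
    (hC : C.IsHermitian) (h1 : (C - 1).PosSemidef) (i : n) : 1 ≤ hC.eigenvalues i := by
  have hv := hC.mulVec_eigenvectorBasis i
  set v : n → ℝ := ⇑(hC.eigenvectorBasis i) with hvdef
  have hnorm : dotProduct (star v) v = 1 := by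
    have h := hC.eigenvectorBasis.orthonormal.1 i
    have := (EuclideanSpace.inner_eq_star_dotProduct (hC.eigenvectorBasis i)
      (hC.eigenvectorBasis i)).symm
    rw [real_inner_self_eq_norm_sq, h] at this
    simpa using this
  have h2 := h1.dotProduct_mulVec_nonneg v
  rw [sub_mulVec, one_mulVec, dotProduct_sub, hv, dotProduct_smul, hnorm] at h2
  simpa using h2

lemma aux_key {n : Type*} [Fintype n] [DecidableEq n] {C : Matrix n n ℝ}
    (hC : C.IsHermitian) (h1 : (C - 1).PosSemidef) (hdet : C.det ≤ Real.exp 1) :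
    (Real.exp 1 • (1 : Matrix n n ℝ) - C).PosSemidef := by
  have hge := aux_eig_ge_one hC h1
  have hprod : C.det = ∏ i, hC.eigenvalues i := by
    simpa using hC.det_eq_prod_eigenvalues
  have hle : ∀ i, hC.eigenvalues i ≤ Real.exp 1 := by
    intro i
    refine le_trans ?_ (hprod ▸ hdet)
    have hone : (1 : ℝ) ≤ ∏ j ∈ Finset.univ.erase i, hC.eigenvalues j := by
      have := Finset.prod_le_prod (s := Finset.univ.erase i)
        (f := fun _ => (1 : ℝ)) (g := hC.eigenvalues)
        (fun j _ => zero_le_one) (fun j _ => hge j)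
      simpa using this
    calc hC.eigenvalues i
        ≤ hC.eigenvalues i * ∏ j ∈ Finset.univ.erase i, hC.eigenvalues j :=
          le_mul_of_one_le_right (by linarith [hge i]) hone
      _ = ∏ j, hC.eigenvalues j := Finset.mul_prod_erase _ _ (Finset.mem_univ i)
  have hspec := hC.spectral_theorem
  set U : Matrix n n ℝ := (hC.eigenvectorUnitary : Matrix n n ℝ)
  have hU : U * star U = 1 := Matrix.mem_unitaryGroup_iff.mp hC.eigenvectorUnitary.2
  have hD : (Real.exp 1 • (1 : Matrix n n ℝ) - C)
      = U * (diagonal (fun i => Real.exp 1 - hC.eigenvalues i)) * star U := by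
    have h1' : Real.exp 1 • (1 : Matrix n n ℝ) = U * (Real.exp 1 • 1) * star U := by
      rw [Matrix.mul_smul, Matrix.smul_mul, mul_one, hU]
    conv_lhs => rw [h1', hspec, Unitary.conjStarAlgAut_apply]
    rw [← Matrix.sub_mul, ← Matrix.mul_sub]
    congr 2
    rw [smul_one_eq_diagonal, ← diagonal_sub]
    rfl
  rw [hD, Matrix.star_eq_conjTranspose]
  refine PosSemidef.mul_mul_conjTranspose_same (posSemidef_diagonal_iff.mpr fun i => ?_) U
  linarith [hle i]

/-- log-determinant doubling criterion.  If `A` and `B` are `d × d`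
real symmetric positive definite matrices with `B ⪯ A` (in the Loewner order) and
`log det A - log det B ≤ 1`, then `A ⪯ e • B`, where `e` is Euler's number. -/
theorem statement_16 {d : ℕ} (A B : Matrix (Fin d) (Fin d) ℝ)
    (hA : A.PosDef) (hB : B.PosDef) (hBA : (A - B).PosSemidef)
    (hdet : Real.log A.det - Real.log B.det ≤ 1) :
    (Real.exp 1 • B - A).PosSemidef := by
  set S := CFC.sqrt B with hSdef
  have hS : S.PosSemidef := (CFC.sqrt_nonneg B).posSemidef
  have hSS : S * S = B := CFC.sqrt_mul_sqrt_self B hB.posSemidef.nonneg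
  have hdetS : S.det ^ 2 = B.det := by rw [pow_two, ← det_mul, hSS]
  have hdetSpos : S.det ≠ 0 := by
    intro h
    have := hB.det_pos
    rw [← hdetS, h] at this; simp at this
  have hSinv : IsUnit S.det := isUnit_iff_ne_zero.mpr hdetSpos
  set T := S⁻¹ with hTdef
  have hST : S * T = 1 := mul_nonsing_inv S hSinv
  have hTS : T * S = 1 := nonsing_inv_mul S hSinv
  have hTH : T.IsHermitian := hS.1.inv
  set C := T * A * T with hCdef
  have hC : C.IsHermitian := by
    rw [hCdef]
    rw [Matrix.IsHermitian, conjTranspose_mul, conjTranspose_mul, hTH.eq, hA.1.eq, mul_assoc]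
  have hTBT : T * B * T = 1 := by
    rw [← hSS, ← mul_assoc, hTS, one_mul, hST]
  have h1 : (C - 1).PosSemidef := by
    have := hBA.conjTranspose_mul_mul_same T
    rw [hTH.eq, Matrix.mul_sub, Matrix.sub_mul, hTBT] at this
    exact this
  have hdet1 : T.det * S.det = 1 := by rw [← det_mul, hTS, det_one]
  have hCB : C.det * B.det = A.det := by
    have h2 : C.det = T.det * A.det * T.det := by rw [hCdef, det_mul, det_mul]
    rw [h2, ← hdetS,
      show T.det * A.det * T.det * S.det ^ 2 = (T.det * S.det) ^ 2 * A.det from by ring,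
      hdet1]
    ring
  have hdetC : C.det = A.det / B.det := (eq_div_iff hB.det_pos.ne').mpr hCB
  have hdetCpos : 0 < C.det := by
    rw [hdetC]; exact div_pos hA.det_pos hB.det_pos
  have hdetCle : C.det ≤ Real.exp 1 := by
    rw [← Real.exp_log hdetCpos]
    apply Real.exp_le_exp.mpr
    rw [hdetC, Real.log_div hA.det_pos.ne' hB.det_pos.ne'] at *
    exact hdet
  have hkey := aux_key hC h1 hdetCle
  have hSCS : S * C * S = A := by
    rw [hCdef]
    simp only [Matrix.mul_assoc]
    rw [hTS, mul_one, ← Matrix.mul_assoc S T A, hST, one_mul]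
  have hfinal : Real.exp 1 • B - A = S * (Real.exp 1 • (1 : Matrix (Fin d) (Fin d) ℝ) - C) * S := by
    rw [Matrix.mul_sub, Matrix.sub_mul, hSCS, Matrix.mul_smul, Matrix.smul_mul, mul_one, hSS]
  have := hkey.conjTranspose_mul_mul_same S
  rw [hS.1.eq] at this
  rwa [hfinal]
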